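/- Let n ≥ 2 be an integer and δ ∈ (1/2, 1]. Then for every coherent random vector (X_1, X_2, …, X_n), one has P(max_{1 ≤ i < j ≤ n} |X_i − X_j| ≥ δ) ≤ min(n(1−δ)/(2−δ), 1). -/

import Mathlib

open MeasureTheory

noncomputable section

/-- The event that some pair of the variables differ by at least `δ`. -/
def maxEvent {Ω : Type} {n : ℕ} (X : Fin n → Ω → ℝ) (δ : ℝ) : Set Ω :=
  {ω | ∃ i j : Fin n, i < j ∧ δ ≤ |X i ω - X j ω|}

/-- A random vector is coherent if each coordinate is a conditional expectation of the
indicator of a common event `A` with respect to some sub-σ-algebra. -/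
def Coherent {Ω : Type} [mΩ : MeasurableSpace Ω] (P : Measure Ω) {n : ℕ}
    (X : Fin n → Ω → ℝ) : Prop :=
  ∃ (G : Fin n → MeasurableSpace Ω) (A : Set Ω),
    (∀ i, G i ≤ mΩ) ∧ MeasurableSet A ∧
    ∀ i, X i =ᵐ[P] P[A.indicator (fun _ => (1 : ℝ)) | G i]

/-- Single-term nonnegativity of the dual certificate. -/
lemma aux_term_nonneg {δ a y u v : ℝ} (hδ1 : 1 / 2 < δ) (hδ2 : δ ≤ 1)
    (ha0 : 0 ≤ a) (ha1 : a ≤ 1) (hy0 : 0 ≤ y) (hy1 : y ≤ 1)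
    (hu : u = if y ≤ 1 - δ then a - y else 0) (hv : v = if δ ≤ y then a - y else 0) :
    0 ≤ 1 / (2 - δ) * (u - v) + (1 - δ) / (2 - δ) := by
  have h2δ : (0:ℝ) < 2 - δ := by linarith
  by_cases h1 : y ≤ 1 - δ
  · have h2 : ¬ δ ≤ y := by intro h; linarith
    subst hu hv
    simp only [h1, if_true, h2, if_false]
    have : 1 / (2 - δ) * ((a - y) - 0) + (1 - δ) / (2 - δ)
        = ((a - y) + (1 - δ)) * (1 / (2 - δ)) := by ring
    rw [this]
    exact mul_nonneg (by linarith) (div_nonneg zero_le_one h2δ.le)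
  · by_cases h2 : δ ≤ y
    · subst hu hv
      simp only [h1, if_false, h2, if_true]
      have : 1 / (2 - δ) * (0 - (a - y)) + (1 - δ) / (2 - δ)
          = ((y - a) + (1 - δ)) * (1 / (2 - δ)) := by ring
      rw [this]
      exact mul_nonneg (by linarith) (div_nonneg zero_le_one h2δ.le)
    · subst hu hv
      simp only [h1, if_false, h2, if_false]
      have : 1 / (2 - δ) * ((0:ℝ) - 0) + (1 - δ) / (2 - δ) = (1 - δ) / (2 - δ) := by ring
      rw [this]
      exact div_nonneg (by linarith) h2δ.le

/-- Pair lower bound of the dual certificate when the two values are δ-separated. -/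
lemma aux_term_pair {δ a yi yj ui vi uj vj : ℝ} (hδ1 : 1 / 2 < δ) (hδ2 : δ ≤ 1)
    (hyi0 : 0 ≤ yi) (hyi1 : yi ≤ 1) (hyj0 : 0 ≤ yj) (hyj1 : yj ≤ 1)
    (hsep : δ ≤ yi - yj)
    (hui : ui = if yi ≤ 1 - δ then a - yi else 0) (hvi : vi = if δ ≤ yi then a - yi else 0)
    (huj : uj = if yj ≤ 1 - δ then a - yj else 0) (hvj : vj = if δ ≤ yj then a - yj else 0) :
    1 ≤ (1 / (2 - δ) * (ui - vi) + (1 - δ) / (2 - δ))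
      + (1 / (2 - δ) * (uj - vj) + (1 - δ) / (2 - δ)) := by
  have h2δ : (0:ℝ) < 2 - δ := by linarith
  have hyi : δ ≤ yi := by linarith
  have hyinot : ¬ yi ≤ 1 - δ := by intro h; linarith
  have hyj : yj ≤ 1 - δ := by linarith
  have hyjnot : ¬ δ ≤ yj := by intro h; linarith
  subst hui hvi huj hvj
  simp only [hyi, if_true, hyinot, if_false, hyj, hyjnot]
  have key : (1 / (2 - δ) * (0 - (a - yi)) + (1 - δ) / (2 - δ))
      + (1 / (2 - δ) * ((a - yj) - 0) + (1 - δ) / (2 - δ)) - 1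
      = (yi - yj - δ) / (2 - δ) := by
    field_simp
    ring
  nlinarith [div_nonneg (show (0:ℝ) ≤ yi - yj - δ by linarith) h2δ.le]

theorem prob_max_pairwise_diff_le {Ω : Type} [mΩ : MeasurableSpace Ω] (P : Measure Ω)
    [IsProbabilityMeasure P] (n : ℕ) (hn : 2 ≤ n) (δ : ℝ)
    (hδ : δ ∈ Set.Ioc (1 / 2 : ℝ) 1) (X : Fin n → Ω → ℝ) (hX : Coherent P X) :
    (P (maxEvent X δ)).toReal ≤ min ((n : ℝ) * (1 - δ) / (2 - δ)) 1 := by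
  obtain ⟨hδ1, hδ2⟩ := hδ
  have h2δ : (0:ℝ) < 2 - δ := by linarith
  obtain ⟨G, A, hG, hA, hXY⟩ := hX
  set B : Ω → ℝ := A.indicator (fun _ => (1 : ℝ)) with hB_def
  have hB_int : Integrable B P := (integrable_const 1).indicator hA
  have hB01 : ∀ ω, 0 ≤ B ω ∧ B ω ≤ 1 := by
    intro ω
    by_cases h : ω ∈ A <;> simp [hB_def, Set.indicator_apply, h]
  set Y : Fin n → Ω → ℝ := fun i => P[B | G i] with hY_def
  have hY_sm : ∀ i, StronglyMeasurable[G i] (Y i) := fun i => stronglyMeasurable_condExp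
  have hY_meas : ∀ i, Measurable (Y i) := fun i =>
    ((hY_sm i).measurable).mono (hG i) le_rfl
  -- a.e. bounds on Y
  have hY0 : ∀ i, ∀ᵐ ω ∂P, 0 ≤ Y i ω := by
    intro i
    exact condExp_nonneg (Filter.Eventually.of_forall fun ω => (hB01 ω).1)
  have hY1 : ∀ i, ∀ᵐ ω ∂P, Y i ω ≤ 1 := by
    intro i
    have h := condExp_mono (m := G i) hB_int (integrable_const 1)
      (Filter.Eventually.of_forall fun ω => (hB01 ω).2)
    rw [condExp_const (hG i)] at h
    exact h
  -- the sets
  set S : Fin n → Set Ω := fun i => {ω | δ ≤ Y i ω} with hS_def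
  set T : Fin n → Set Ω := fun i => {ω | Y i ω ≤ 1 - δ} with hT_def
  have hS_G : ∀ i, MeasurableSet[G i] (S i) := fun i =>
    (hY_sm i).measurable measurableSet_Ici
  have hT_G : ∀ i, MeasurableSet[G i] (T i) := fun i =>
    (hY_sm i).measurable measurableSet_Iic
  have hS_meas : ∀ i, MeasurableSet (S i) := fun i => hG i _ (hS_G i)
  have hT_meas : ∀ i, MeasurableSet (T i) := fun i => hG i _ (hT_G i)
  -- the difference function and its vanishing set integrals
  have hh_int : ∀ i, Integrable (fun ω => B ω - Y i ω) P := fun i =>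
    hB_int.sub integrable_condExp
  have hSint : ∀ i, ∫ ω in S i, (B ω - Y i ω) ∂P = 0 := by
    intro i
    rw [integral_sub hB_int.integrableOn integrable_condExp.integrableOn,
      ← setIntegral_condExp (hG i) hB_int (hS_G i)]
    exact sub_self _
  have hTint : ∀ i, ∫ ω in T i, (B ω - Y i ω) ∂P = 0 := by
    intro i
    rw [integral_sub hB_int.integrableOn integrable_condExp.integrableOn,
      ← setIntegral_condExp (hG i) hB_int (hT_G i)]
    exact sub_self _
  -- the dual certificate function
  set F : Ω → ℝ := fun ω => ∑ i, (1 / (2 - δ) *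
      ((T i).indicator (fun w => B w - Y i w) ω - (S i).indicator (fun w => B w - Y i w) ω)
      + (1 - δ) / (2 - δ)) with hF_def
  have hterm_int : ∀ i : Fin n, Integrable (fun ω => 1 / (2 - δ) *
      ((T i).indicator (fun w => B w - Y i w) ω - (S i).indicator (fun w => B w - Y i w) ω)
      + (1 - δ) / (2 - δ)) P := by
    intro i
    exact ((((hh_int i).indicator (hT_meas i)).sub
      ((hh_int i).indicator (hS_meas i))).const_mul _).add (integrable_const _)
  have hF_int : Integrable F P := by
    rw [hF_def]
    exact integrable_finset_sum _ fun i _ => hterm_int i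
  have hF_integral : ∫ ω, F ω ∂P = (n : ℝ) * ((1 - δ) / (2 - δ)) := by
    rw [hF_def]
    rw [integral_finset_sum _ fun i _ => hterm_int i]
    have : ∀ i : Fin n, ∫ ω, (1 / (2 - δ) *
        ((T i).indicator (fun w => B w - Y i w) ω - (S i).indicator (fun w => B w - Y i w) ω)
        + (1 - δ) / (2 - δ)) ∂P = (1 - δ) / (2 - δ) := by
      intro i
      have h2 : Integrable (fun ω => (T i).indicator (fun w => B w - Y i w) ω) P :=
        (hh_int i).indicator (hT_meas i)
      have h3 : Integrable (fun ω => (S i).indicator (fun w => B w - Y i w) ω) P :=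
        (hh_int i).indicator (hS_meas i)
      have h1 : Integrable (fun ω => 1 / (2 - δ) *
          ((T i).indicator (fun w => B w - Y i w) ω
            - (S i).indicator (fun w => B w - Y i w) ω)) P := (h2.sub h3).const_mul _
      rw [integral_add h1 (integrable_const _), integral_const_mul,
        integral_sub h2 h3,
        integral_indicator (hT_meas i), integral_indicator (hS_meas i),
        hTint i, hSint i, integral_const]
      simp
    rw [Finset.sum_congr rfl fun i _ => this i]
    simp [Finset.sum_const, mul_comm]
  -- measurability of maxEvent Y δ
  have hE_meas : MeasurableSet (maxEvent Y δ) := by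
    have : maxEvent Y δ = ⋃ (i : Fin n), ⋃ (j : Fin n),
        {ω | i < j ∧ δ ≤ |Y i ω - Y j ω|} := by
      ext ω; simp [maxEvent]
    rw [this]
    refine MeasurableSet.iUnion fun i => MeasurableSet.iUnion fun j => ?_
    by_cases hij : i < j
    · simp only [hij, true_and]
      exact measurableSet_le measurable_const ((hY_meas i).sub (hY_meas j)).abs
    · simp [hij]
  -- a.e. pointwise bound : indicator of maxEvent Y δ ≤ F
  have hae : (maxEvent Y δ).indicator (fun _ => (1:ℝ)) ≤ᵐ[P] F := by
    have hgood : ∀ᵐ ω ∂P, ∀ i, 0 ≤ Y i ω ∧ Y i ω ≤ 1 := by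
      rw [ae_all_iff]
      intro i
      exact (hY0 i).and (hY1 i)
    filter_upwards [hgood] with ω hω
    have hind : ∀ i : Fin n,
        (T i).indicator (fun w => B w - Y i w) ω = (if Y i ω ≤ 1 - δ then B ω - Y i ω else 0)
        ∧ (S i).indicator (fun w => B w - Y i w) ω = (if δ ≤ Y i ω then B ω - Y i ω else 0) := by
      intro i
      constructor <;> rw [Set.indicator_apply] <;> rfl
    have hterm0 : ∀ i : Fin n, 0 ≤ 1 / (2 - δ) *
        ((T i).indicator (fun w => B w - Y i w) ω - (S i).indicator (fun w => B w - Y i w) ω)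
        + (1 - δ) / (2 - δ) := by
      intro i
      exact aux_term_nonneg hδ1 hδ2 (hB01 ω).1 (hB01 ω).2 (hω i).1 (hω i).2
        (hind i).1 (hind i).2
    by_cases hE : ω ∈ maxEvent Y δ
    · rw [Set.indicator_of_mem hE]
      obtain ⟨i, j, hij, hsep⟩ := hE
      have hij' : i ≠ j := ne_of_lt hij
      -- handle the two signs of the separation
      have hpair : (1:ℝ) ≤ (1 / (2 - δ) *
          ((T i).indicator (fun w => B w - Y i w) ω - (S i).indicator (fun w => B w - Y i w) ω)
          + (1 - δ) / (2 - δ)) + (1 / (2 - δ) *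
          ((T j).indicator (fun w => B w - Y j w) ω - (S j).indicator (fun w => B w - Y j w) ω)
          + (1 - δ) / (2 - δ)) := by
        rcases le_abs.mp hsep with h | h
        · exact aux_term_pair hδ1 hδ2 (hω i).1 (hω i).2 (hω j).1 (hω j).2 h
            (hind i).1 (hind i).2 (hind j).1 (hind j).2
        · rw [add_comm]
          exact aux_term_pair hδ1 hδ2 (hω j).1 (hω j).2 (hω i).1 (hω i).2 (by linarith)
            (hind j).1 (hind j).2 (hind i).1 (hind i).2
      calc (1:ℝ) ≤ _ := hpair
        _ ≤ F ω := by
          rw [hF_def]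
          have hsub : ({i, j} : Finset (Fin n)) ⊆ Finset.univ := Finset.subset_univ _
          have := Finset.sum_le_sum_of_subset_of_nonneg hsub
            (fun k _ _ => hterm0 k)
          rw [Finset.sum_pair hij'] at this
          exact this
    · rw [Set.indicator_of_notMem hE]
      exact Finset.sum_nonneg fun i _ => hterm0 i
  -- main bound for the measurable version
  have hmain : (P (maxEvent Y δ)).toReal ≤ (n : ℝ) * ((1 - δ) / (2 - δ)) := by
    change P.real (maxEvent Y δ) ≤ _
    rw [← integral_indicator_one hE_meas, ← hF_integral]
    exact integral_mono_ae ((integrable_const (1:ℝ)).indicator hE_meas) hF_int hae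
  -- compare maxEvent X δ with maxEvent Y δ
  have hXY' : ∀ᵐ ω ∂P, ∀ i, X i ω = Y i ω := by
    rw [ae_all_iff]; exact hXY
  have hsubset : P (maxEvent X δ) ≤ P (maxEvent Y δ) := by
    have h1 : P (maxEvent X δ \ maxEvent Y δ) = 0 := by
      rw [← nonpos_iff_eq_zero]
      refine le_trans (measure_mono ?_) (le_of_eq (ae_iff.mp hXY'))
      intro ω hω
      simp only [Set.mem_setOf_eq]
      intro hall
      obtain ⟨hXω, hYω⟩ := hω
      apply hYω
      obtain ⟨i, j, hij, hsep⟩ := hXω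
      exact ⟨i, j, hij, by rwa [← hall i, ← hall j]⟩
    calc P (maxEvent X δ) ≤ P ((maxEvent X δ \ maxEvent Y δ) ∪ maxEvent Y δ) :=
          measure_mono (by intro ω hω; by_cases h : ω ∈ maxEvent Y δ <;> simp [h, hω])
      _ ≤ P (maxEvent X δ \ maxEvent Y δ) + P (maxEvent Y δ) := measure_union_le _ _
      _ = P (maxEvent Y δ) := by rw [h1, zero_add]
  have htoReal : (P (maxEvent X δ)).toReal ≤ (P (maxEvent Y δ)).toReal :=
    ENNReal.toReal_mono (measure_ne_top _ _) hsubset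
  refine le_min ?_ ?_
  · calc (P (maxEvent X δ)).toReal ≤ (P (maxEvent Y δ)).toReal := htoReal
      _ ≤ (n : ℝ) * ((1 - δ) / (2 - δ)) := hmain
      _ = (n : ℝ) * (1 - δ) / (2 - δ) := by ring
  · have h : P (maxEvent X δ) ≤ 1 := prob_le_one
    have h' := ENNReal.toReal_mono ENNReal.one_ne_top h
    simpa using h'
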